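/- If τ satisfies the 2-BKP bilinear equation, then τ satisfies the one-component BKP bilinear equation in each sector: for independent families t', t, t̄, the constant term in z of e^{ξ(t'−t,z)}·τ(t'−2[z^{−1}], t̄)·τ(t+2[z^{−1}], t̄) equals τ(t', t̄)·τ(t, t̄) as an identity in ℂ[[t',t,t̄]]; and for independent families t, t̄', t̄, the constant term in z of e^{ξ(t̄'−t̄,z)}·τ(t, t̄'−2[z^{−1}])·τ(t, t̄+2[z^{−1}]) equals τ(t, t̄')·τ(t, t̄) as an identity in ℂ[[t,t̄',t̄]]. -/

import Mathlib

noncomputable section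

/-- Multivariate power series over `ℂ` with variable set `σ`. -/
abbrev MPS (σ : Type) : Type := MvPowerSeries σ ℂ

/-- The partial derivative `∂/∂x_i` on multivariate power series, defined coefficientwise. -/
def pd {σ : Type} (i : σ) (f : MPS σ) : MPS σ :=
  fun m => ((m i + 1 : ℕ) : ℂ) * MvPowerSeries.coeff (m + Finsupp.single i 1) f

open scoped Classical in
/-- Renaming of variables (along an injective map this is the natural embedding of
power series rings). -/
def embed {σ σ' : Type} (f : σ → σ') (τ : MPS σ) : MPS σ' :=
  fun m => if h : ∃ m' : σ →₀ ℕ, Finsupp.mapDomain f m' = m then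
    MvPowerSeries.coeff h.choose τ else 0

/-- Coefficients `G_k` of `exp (Σ_{j≥1} a_j w^j A_j) = Σ_k G_k w^k` for a commuting family of
`ℂ`-linear operators, encoded via `M j = j • a_j • A_j` and the recursion
`(k+1) G_{k+1} = Σ_{j=1}^{k+1} M j ∘ G_{k+1-j}`. -/
def expC {V : Type} [AddCommMonoid V] [Module ℂ V] (M : ℕ → V → V) : ℕ → V → V
  | 0, τ => τ
  | (k+1), τ =>
      ((k + 1 : ℂ))⁻¹ • ∑ i ∈ (Finset.range (k+1)).attach,
        M (k + 1 - i.1) (expC M i.1 τ)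
termination_by k _ => k
decreasing_by exact Finset.mem_range.mp i.2

/-- Coefficients (as operators) of the shift `τ ↦ τ(t + c[w])`, i.e. of
`exp (Σ_{n≥0} (c w^{2n+1}/(2n+1)) ∂_{v n}) = Σ_k (shiftC c v k) w^k`, where `v n` is the
variable `t_{2n+1}` of the chosen family. -/
def shiftC {σ : Type} (c : ℂ) (v : ℕ → σ) : ℕ → MPS σ → MPS σ :=
  expC (fun j φ => if j % 2 = 1 then c • pd (v (j / 2)) φ else 0)

/-- Coefficients `q_k` of `e^{ξ(s,w)} = exp (Σ_{n≥0} s_n w^{2n+1}) = Σ_k q_k w^k`. -/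
def xiC {σ : Type} (s : ℕ → MPS σ) : ℕ → MPS σ :=
  fun k => expC (fun j φ => if j % 2 = 1 then (j : ℂ) • (s (j / 2) * φ) else 0) k 1

/-- Weighted degree of a monomial, for weights `d`. -/
def wt {σ : Type} (d : σ → ℕ) (m : σ →₀ ℕ) : ℕ := m.sum fun i e => e * d i

/-- The constant term in `z` of `(Σ_k q_k z^k) · (Σ_i a_i z^{-i}) · (Σ_j b_j z^{-j})`,
defined coefficientwise (each coefficient is a finite sum because `q_k` is
weighted-homogeneous of weight `k`). -/
def constTerm {σ : Type} (d : σ → ℕ) (q a b : ℕ → MPS σ) : MPS σ :=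
  fun m => ∑ k ∈ Finset.range (wt d m + 1),
    MvPowerSeries.coeff m (q k * ∑ i ∈ Finset.range (k+1), a i * b (k - i))

/-- Variable set of `T = ℂ[[t;t̄]]`: `(false, n) ↦ t_{2n+1}`, `(true, n) ↦ t̄_{2n+1}`. -/
abbrev σT : Type := Bool × ℕ

/-- Variable set of `ℂ[[t',t,t̄',t̄]]`: `(p, b, n)` is `t_{2n+1}`-type (`b = false`) or
`t̄_{2n+1}`-type (`b = true`), primed iff `p = true`. -/
abbrev σU : Type := Bool × Bool × ℕ

abbrev T : Type := MPS σT

/-- The embedding `τ(t,t̄) ↦ τ(t',t̄')`. -/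
def ιP : T → MPS σU := embed fun p => (true, p.1, p.2)

/-- The embedding `τ(t,t̄) ↦ τ(t,t̄)` into the big ring. -/
def ιO : T → MPS σU := embed fun p => (false, p.1, p.2)

/-- `t_{2n+1}` and `t̄_{2n+1}` have weight `2n+1`. -/
def dU : σU → ℕ := fun p => 2 * p.2.2 + 1

/-- `τ` satisfies the 2-BKP bilinear equation: the constant term in `z` of
`e^{ξ(t'−t,z)} τ(t'−2[z⁻¹], t̄') τ(t+2[z⁻¹], t̄)` equals the constant term in `z` of
`e^{ξ(t̄'−t̄,z)} τ(t', t̄'−2[z⁻¹]) τ(t, t̄+2[z⁻¹])`, in `ℂ[[t',t,t̄',t̄]]`. -/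
def BKP2 (τ : T) : Prop :=
  constTerm dU
    (xiC fun n => (MvPowerSeries.X (true, false, n) : MPS σU) -
      MvPowerSeries.X (false, false, n))
    (fun k => shiftC (-2) (fun n => ((true, false, n) : σU)) k (ιP τ))
    (fun k => shiftC 2 (fun n => ((false, false, n) : σU)) k (ιO τ))
  =
  constTerm dU
    (xiC fun n => (MvPowerSeries.X (true, true, n) : MPS σU) -
      MvPowerSeries.X (false, true, n))
    (fun k => shiftC (-2) (fun n => ((true, true, n) : σU)) k (ιP τ))
    (fun k => shiftC 2 (fun n => ((false, true, n) : σU)) k (ιO τ))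

/-- The ring of formal series in `λ⁻¹, μ⁻¹` (with finitely many positive powers of
`λ, μ`) with coefficients in `T`, realized as iterated Hahn/Laurent series:
the outer exponent is the power of `λ⁻¹`, the inner one the power of `μ⁻¹`. -/
abbrev W : Type := HahnSeries ℤ (HahnSeries ℤ T)

/-- `λ` as an element of `W`. -/
def lamW : W := HahnSeries.single (-1 : ℤ) 1

/-- `μ` as an element of `W`. -/
def muW : W := HahnSeries.C (HahnSeries.single (-1 : ℤ) (1 : T))

/-- A constant (independent of `λ, μ`) element of `W`. -/
def cW (x : T) : W := HahnSeries.C (HahnSeries.C x)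

/-- The series `Σ_{k≥0} a_k λ^{-k}` as an element of `W`. -/
def Wl (a : ℕ → T) : W :=
  HahnSeries.ofPowerSeries ℤ (HahnSeries ℤ T) (PowerSeries.mk fun k => HahnSeries.C (a k))

/-- The series `Σ_{l≥0} a_l μ^{-l}` as an element of `W`. -/
def Wm (a : ℕ → T) : W :=
  HahnSeries.C (HahnSeries.ofPowerSeries ℤ T (PowerSeries.mk a))

/-- The double series `Σ_{k,l≥0} a_{k,l} λ^{-k} μ^{-l}` as an element of `W`. -/
def Wlm (a : ℕ → ℕ → T) : W :=
  HahnSeries.ofPowerSeries ℤ (HahnSeries ℤ T)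
    (PowerSeries.mk fun k => HahnSeries.ofPowerSeries ℤ T (PowerSeries.mk (a k)))

/-- Coefficients of the shift `t ↦ t + 2[w]` (unbarred sector) on `T`. -/
def Gt : ℕ → T → T := shiftC 2 (fun n => ((false, n) : σT))

/-- Coefficients of the shift `t̄ ↦ t̄ + 2[w]` (barred sector) on `T`. -/
def Gb : ℕ → T → T := shiftC 2 (fun n => ((true, n) : σT))

/-- `∂_1 = ∂/∂t_1`. -/
def d1 : T → T := pd ((false, 0) : σT)

/-- `∂̄_1 = ∂/∂t̄_1`. -/
def db1 : T → T := pd ((true, 0) : σT)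

/-- Variable set of the three-family ring `ℂ[[t',t,t̄]]` (resp. `ℂ[[t,t̄',t̄]]`). -/
abbrev σ3 : Type := Fin 3 × ℕ

def d3 : σ3 → ℕ := fun p => 2 * p.2 + 1

/-- Embedding `τ(t,t̄) ↦ τ(t',t̄)` into `ℂ[[t',t,t̄]]` (families: `0 = t'`, `1 = t`, `2 = t̄`). -/
def j0 : T → MPS σ3 := embed fun p => (if p.1 then (2 : Fin 3) else 0, p.2)

/-- Embedding `τ(t,t̄) ↦ τ(t,t̄)` into `ℂ[[t',t,t̄]]` (families: `0 = t'`, `1 = t`, `2 = t̄`). -/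
def j1 : T → MPS σ3 := embed fun p => (if p.1 then (2 : Fin 3) else 1, p.2)

/-- Embedding `τ(t,t̄) ↦ τ(t,t̄')` into `ℂ[[t,t̄',t̄]]` (families: `0 = t̄'`, `1 = t`, `2 = t̄`). -/
def j0' : T → MPS σ3 := embed fun p => (if p.1 then (0 : Fin 3) else 1, p.2)

/-- Embedding `τ(t,t̄) ↦ τ(t,t̄)` into `ℂ[[t,t̄',t̄]]` (families: `0 = t̄'`, `1 = t`, `2 = t̄`). -/
def j1' : T → MPS σ3 := embed fun p => (if p.1 then (2 : Fin 3) else 1, p.2)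

namespace BKPaux

open Finsupp MvPowerSeries

open scoped Classical

variable {σ σ' σ'' : Type}

lemma coeff_fun (f : (σ →₀ ℕ) → ℂ) (m : σ →₀ ℕ) :
    MvPowerSeries.coeff m (f : MPS σ) = f m := rfl

/- ## embed -/

lemma coeff_embed (f : σ → σ') (τ : MPS σ) (m : σ' →₀ ℕ) :
    MvPowerSeries.coeff m (embed f τ) =
      if h : ∃ m' : σ →₀ ℕ, Finsupp.mapDomain f m' = m then
        MvPowerSeries.coeff h.choose τ else 0 := rfl

lemma coeff_embed_of_not (f : σ → σ') (τ : MPS σ) (m : σ' →₀ ℕ)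
    (h : ¬ ∃ m' : σ →₀ ℕ, Finsupp.mapDomain f m' = m) :
    MvPowerSeries.coeff m (embed f τ) = 0 := by
  rw [coeff_embed, dif_neg h]

lemma coeff_embed_mapDomain (f : σ → σ') (hf : Function.Injective f) (τ : MPS σ)
    (m0 : σ →₀ ℕ) :
    MvPowerSeries.coeff (Finsupp.mapDomain f m0) (embed f τ) =
      MvPowerSeries.coeff m0 τ := by
  have h : ∃ m' : σ →₀ ℕ, Finsupp.mapDomain f m' = Finsupp.mapDomain f m0 := ⟨m0, rfl⟩
  have hch : h.choose = m0 := Finsupp.mapDomain_injective hf h.choose_spec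
  rw [coeff_embed, dif_pos h, hch]

/-- `embed` as a linear map. -/
def embedL (f : σ → σ') : MPS σ →ₗ[ℂ] MPS σ' where
  toFun := embed f
  map_add' x y := by
    apply MvPowerSeries.ext; intro m
    rw [map_add, coeff_embed, coeff_embed, coeff_embed]
    split
    · rw [map_add]
    · rw [add_zero]
  map_smul' c x := by
    apply MvPowerSeries.ext; intro m
    rw [RingHom.id_apply, MvPowerSeries.coeff_smul, coeff_embed, coeff_embed]
    split
    · rw [MvPowerSeries.coeff_smul]
    · rw [mul_zero]

lemma embed_smul (f : σ → σ') (c : ℂ) (x : MPS σ) : embed f (c • x) = c • embed f x :=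
  map_smul (embedL f) c x

lemma embed_zero (f : σ → σ') : embed f (0 : MPS σ) = 0 := map_zero (embedL f)

lemma embedL_apply (f : σ → σ') (τ : MPS σ) : embedL f τ = embed f τ := rfl

/- ## pd and embed -/

lemma coeff_pd (i : σ) (x : MPS σ) (m : σ →₀ ℕ) :
    MvPowerSeries.coeff m (pd i x) =
      ((m i + 1 : ℕ) : ℂ) * MvPowerSeries.coeff (m + Finsupp.single i 1) x := rfl

lemma pd_embed (f : σ → σ') (hf : Function.Injective f) (i : σ) (x : MPS σ) :
    pd (f i) (embed f x) = embed f (pd i x) := by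
  apply MvPowerSeries.ext; intro m
  rw [coeff_pd]
  by_cases h : ∃ m0 : σ →₀ ℕ, Finsupp.mapDomain f m0 = m
  · obtain ⟨m0, rfl⟩ := h
    have h1 : Finsupp.mapDomain f m0 + Finsupp.single (f i) 1
        = Finsupp.mapDomain f (m0 + Finsupp.single i 1) := by
      rw [Finsupp.mapDomain_add, Finsupp.mapDomain_single]
    have h2 : (Finsupp.mapDomain f m0) (f i) = m0 i := Finsupp.mapDomain_apply hf m0 i
    rw [h1, coeff_embed_mapDomain f hf, coeff_embed_mapDomain f hf, coeff_pd, h2]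
  · rw [coeff_embed_of_not f _ _ h]
    have h' : ¬ ∃ m' : σ →₀ ℕ, Finsupp.mapDomain f m' = m + Finsupp.single (f i) 1 := by
      rintro ⟨m', hm'⟩
      apply h
      have hi : 1 ≤ m' i := by
        have : (Finsupp.mapDomain f m') (f i) = m' i := Finsupp.mapDomain_apply hf m' i
        rw [hm'] at this
        simp only [Finsupp.add_apply, Finsupp.single_eq_same] at this
        omega
      have hle : Finsupp.single i 1 ≤ m' := Finsupp.single_le_iff.mpr hi
      refine ⟨m' - Finsupp.single i 1, ?_⟩
      have hsplit : (m' - Finsupp.single i 1) + Finsupp.single i 1 = m' :=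
        tsub_add_cancel_of_le hle
      have := congrArg (Finsupp.mapDomain f) hsplit
      rw [Finsupp.mapDomain_add, Finsupp.mapDomain_single, hm'] at this
      exact add_right_cancel this
    rw [coeff_embed_of_not f _ _ h', mul_zero]

/- ## expC equations and commutation -/

lemma expC_zero {V : Type} [AddCommMonoid V] [Module ℂ V] (M : ℕ → V → V) (τ : V) :
    expC M 0 τ = τ := by rw [expC]

lemma expC_succ {V : Type} [AddCommMonoid V] [Module ℂ V] (M : ℕ → V → V) (k : ℕ) (τ : V) :
    expC M (k+1) τ = ((k + 1 : ℂ))⁻¹ • ∑ i ∈ (Finset.range (k+1)).attach,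
        M (k + 1 - i.1) (expC M i.1 τ) := by rw [expC]

lemma expC_comm {V W : Type} [AddCommMonoid V] [Module ℂ V] [AddCommMonoid W] [Module ℂ W]
    (L : V →ₗ[ℂ] W) (M : ℕ → V → V) (M' : ℕ → W → W)
    (h : ∀ j x, L (M j x) = M' j (L x)) :
    ∀ (k : ℕ) (τ : V), L (expC M k τ) = expC M' k (L τ) := by
  intro k
  induction k using Nat.strong_induction_on with
  | _ k ih =>
    intro τ
    match k with
    | 0 => rw [expC_zero, expC_zero]
    | (k+1) =>
      rw [expC_succ, expC_succ, map_smul, map_sum]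
      congr 1
      refine Finset.sum_congr rfl fun i _ => ?_
      rw [h, ih i.1 (Finset.mem_range.mp i.2)]

lemma shiftC_zero (c : ℂ) (v : ℕ → σ) (φ : MPS σ) : shiftC c v 0 φ = φ := expC_zero _ _

lemma shiftC_embed (f : σ → σ') (hf : Function.Injective f) (c : ℂ)
    (v : ℕ → σ) (v' : ℕ → σ') (hv : ∀ n, v' n = f (v n)) (k : ℕ) (τ : MPS σ) :
    shiftC c v' k (embed f τ) = embed f (shiftC c v k τ) := by
  have := expC_comm (embedL f)
    (fun j φ => if j % 2 = 1 then c • pd (v (j / 2)) φ else 0)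
    (fun j φ => if j % 2 = 1 then c • pd (v' (j / 2)) φ else 0)
    (fun j x => by
      split
      · rw [map_smul, embedL_apply, embedL_apply, ← pd_embed f hf, hv]
      · exact map_zero _) k τ
  rw [embedL_apply, embedL_apply] at this
  exact this.symm

/- ## Rename along finite-fiber maps -/

lemma le_mapDomain (r : σ → σ') (m' : σ →₀ ℕ) (u : σ) :
    m' u ≤ Finsupp.mapDomain r m' (r u) := by
  by_cases hu : u ∈ m'.support
  · have h1 : Finsupp.mapDomain r m' (r u)
        = ∑ a ∈ m'.support, (Finsupp.single (r a) (m' a)) (r u) := by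
      rw [Finsupp.mapDomain, Finsupp.sum_apply]
      rfl
    rw [h1]
    have h2 := Finset.single_le_sum
      (f := fun a => (Finsupp.single (r a) (m' a)) (r u)) (fun a _ => Nat.zero_le _) hu
    simpa using h2
  · simp [Finsupp.notMem_support_iff.mp hu]

lemma fibFinite {r : σ → σ'} (hr : ∀ j : σ', (r ⁻¹' {j}).Finite) (m : σ' →₀ ℕ) :
    {m' : σ →₀ ℕ | Finsupp.mapDomain r m' = m}.Finite := by
  set S : Finset σ := m.support.biUnion (fun j => (hr j).toFinset) with hS
  set B : σ →₀ ℕ := Finsupp.onFinset S (fun u => m (r u)) (by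
    intro u hu
    rw [hS, Finset.mem_biUnion]
    exact ⟨r u, Finsupp.mem_support_iff.mpr hu, by simp⟩) with hB
  apply (Set.finite_Iic B).subset
  intro m' hm'
  rw [Set.mem_setOf_eq] at hm'
  rw [Set.mem_Iic, Finsupp.le_def]
  intro u
  have h1 := le_mapDomain r m' u
  rw [hm'] at h1
  exact h1

/-- The fiber of `Finsupp.mapDomain r` over `m`, as a `Finset`. -/
def fib {r : σ → σ'} (hr : ∀ j : σ', (r ⁻¹' {j}).Finite) (m : σ' →₀ ℕ) :
    Finset (σ →₀ ℕ) := (fibFinite hr m).toFinset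

lemma mem_fib {r : σ → σ'} (hr : ∀ j : σ', (r ⁻¹' {j}).Finite) (m : σ' →₀ ℕ)
    (m' : σ →₀ ℕ) : m' ∈ fib hr m ↔ Finsupp.mapDomain r m' = m := by
  rw [fib, Set.Finite.mem_toFinset, Set.mem_setOf_eq]

/-- Renaming of variables along a finite-fiber map, as a linear map. -/
def Rn {r : σ → σ'} (hr : ∀ j : σ', (r ⁻¹' {j}).Finite) : MPS σ →ₗ[ℂ] MPS σ' where
  toFun φ := fun m => ∑ m' ∈ fib hr m, MvPowerSeries.coeff m' φ
  map_add' x y := by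
    apply MvPowerSeries.ext; intro m
    show ∑ m' ∈ fib hr m, MvPowerSeries.coeff m' (x + y)
      = (∑ m' ∈ fib hr m, MvPowerSeries.coeff m' x) + ∑ m' ∈ fib hr m, MvPowerSeries.coeff m' y
    rw [← Finset.sum_add_distrib]
    exact Finset.sum_congr rfl fun m' _ => map_add _ x y
  map_smul' c x := by
    apply MvPowerSeries.ext; intro m
    show ∑ m' ∈ fib hr m, MvPowerSeries.coeff m' (c • x)
      = c * ∑ m' ∈ fib hr m, MvPowerSeries.coeff m' x
    rw [Finset.mul_sum]
    exact Finset.sum_congr rfl fun m' _ => map_smul (MvPowerSeries.coeff m') c x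

lemma coeff_Rn {r : σ → σ'} (hr : ∀ j : σ', (r ⁻¹' {j}).Finite) (φ : MPS σ) (m : σ' →₀ ℕ) :
    MvPowerSeries.coeff m (Rn hr φ) = ∑ m' ∈ fib hr m, MvPowerSeries.coeff m' φ := rfl

lemma Rn_one {r : σ → σ'} (hr : ∀ j : σ', (r ⁻¹' {j}).Finite) :
    Rn hr (1 : MPS σ) = 1 := by
  apply MvPowerSeries.ext; intro m
  rw [coeff_Rn]
  by_cases hm : m = 0
  · subst hm
    have hfib : fib hr (0 : σ' →₀ ℕ) = {0} := by
      ext m'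
      rw [mem_fib, Finset.mem_singleton]
      constructor
      · intro h
        ext u
        have h1 := le_mapDomain r m' u
        rw [h] at h1
        simpa using h1
      · rintro rfl
        exact Finsupp.mapDomain_zero
    rw [hfib, Finset.sum_singleton]
    simp [MvPowerSeries.coeff_one]
  · rw [MvPowerSeries.coeff_one, if_neg hm]
    apply Finset.sum_eq_zero
    intro m' hm'
    rw [MvPowerSeries.coeff_one, if_neg]
    rintro rfl
    rw [mem_fib, Finsupp.mapDomain_zero] at hm'
    exact hm hm'.symm

lemma Rn_mul {r : σ → σ'} (hr : ∀ j : σ', (r ⁻¹' {j}).Finite) (x y : MPS σ) :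
    Rn hr (x * y) = Rn hr x * Rn hr y := by
  apply MvPowerSeries.ext; intro m
  rw [coeff_Rn, MvPowerSeries.coeff_mul]
  have hL : ∑ m' ∈ fib hr m, MvPowerSeries.coeff m' (x * y)
      = ∑ p ∈ (fib hr m).biUnion (fun m' => Finset.HasAntidiagonal.antidiagonal m'),
          MvPowerSeries.coeff p.1 x * MvPowerSeries.coeff p.2 y := by
    rw [Finset.sum_biUnion]
    · exact Finset.sum_congr rfl fun m' _ => MvPowerSeries.coeff_mul m' x y
    · intro a ha b hb hab
      rw [Function.onFun, Finset.disjoint_left]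
      intro p hpa hpb
      rw [Finset.HasAntidiagonal.mem_antidiagonal] at hpa hpb
      exact hab (hpa ▸ hpb)
  have hR : ∑ p ∈ Finset.HasAntidiagonal.antidiagonal m,
        MvPowerSeries.coeff p.1 (Rn hr x) * MvPowerSeries.coeff p.2 (Rn hr y)
      = ∑ p ∈ (Finset.HasAntidiagonal.antidiagonal m).biUnion (fun q => fib hr q.1 ×ˢ fib hr q.2),
          MvPowerSeries.coeff p.1 x * MvPowerSeries.coeff p.2 y := by
    rw [Finset.sum_biUnion]
    · refine Finset.sum_congr rfl fun q _ => ?_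
      rw [coeff_Rn, coeff_Rn, Finset.sum_mul_sum, Finset.sum_product]
    · intro a ha b hb hab
      rw [Function.onFun, Finset.disjoint_left]
      intro p hpa hpb
      rw [Finset.mem_product, mem_fib, mem_fib] at hpa hpb
      exact hab (Prod.ext (hpa.1 ▸ hpb.1) (hpa.2 ▸ hpb.2))
  rw [hL, hR]
  apply Finset.sum_congr _ (fun _ _ => rfl)
  ext p
  rw [Finset.mem_biUnion, Finset.mem_biUnion]
  constructor
  · rintro ⟨m', hm', hp⟩
    rw [mem_fib] at hm'
    rw [Finset.HasAntidiagonal.mem_antidiagonal] at hp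
    refine ⟨(Finsupp.mapDomain r p.1, Finsupp.mapDomain r p.2), ?_, ?_⟩
    · rw [Finset.HasAntidiagonal.mem_antidiagonal]
      rw [← Finsupp.mapDomain_add, hp, hm']
    · rw [Finset.mem_product, mem_fib, mem_fib]
      exact ⟨rfl, rfl⟩
  · rintro ⟨q, hq, hp⟩
    rw [Finset.HasAntidiagonal.mem_antidiagonal] at hq
    rw [Finset.mem_product, mem_fib, mem_fib] at hp
    refine ⟨p.1 + p.2, ?_, ?_⟩
    · rw [mem_fib, Finsupp.mapDomain_add, hp.1, hp.2, hq]
    · rw [Finset.HasAntidiagonal.mem_antidiagonal]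

lemma Rn_X {r : σ → σ'} (hr : ∀ j : σ', (r ⁻¹' {j}).Finite) (u : σ) :
    Rn hr (MvPowerSeries.X u : MPS σ) = MvPowerSeries.X (r u) := by
  apply MvPowerSeries.ext; intro m
  rw [coeff_Rn, MvPowerSeries.coeff_X]
  have h1 : ∀ m' ∈ fib hr m, MvPowerSeries.coeff m' (MvPowerSeries.X u : MPS σ)
      = if m' = Finsupp.single u 1 then 1 else 0 := fun m' _ => MvPowerSeries.coeff_X m' u
  rw [Finset.sum_congr rfl h1, Finset.sum_ite_eq' (fib hr m) (Finsupp.single u 1)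
    (fun _ => (1 : ℂ))]
  simp only [mem_fib, Finsupp.mapDomain_single]
  by_cases h : m = Finsupp.single (r u) 1
  · rw [if_pos h.symm, if_pos h]
  · rw [if_neg (fun hh => h hh.symm), if_neg h]

lemma Rn_embed {r : σ → σ'} (hr : ∀ j : σ', (r ⁻¹' {j}).Finite) (g : σ'' → σ)
    (hg : Function.Injective (r ∘ g)) (τ : MPS σ'') :
    Rn hr (embed g τ) = embed (r ∘ g) τ := by
  have hg' : Function.Injective g := fun a b h => hg (congrArg r h)
  apply MvPowerSeries.ext; intro m
  rw [coeff_Rn]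
  by_cases h : ∃ m0 : σ'' →₀ ℕ, Finsupp.mapDomain (r ∘ g) m0 = m
  · obtain ⟨m0, rfl⟩ := h
    rw [coeff_embed_mapDomain (r ∘ g) hg]
    rw [Finset.sum_eq_single (Finsupp.mapDomain g m0)]
    · exact coeff_embed_mapDomain g hg' τ m0
    · intro b hb hne
      by_cases hb' : ∃ m1 : σ'' →₀ ℕ, Finsupp.mapDomain g m1 = b
      · obtain ⟨m1, rfl⟩ := hb'
        exfalso
        apply hne
        rw [mem_fib, ← Finsupp.mapDomain_comp] at hb
        rw [Finsupp.mapDomain_injective hg hb]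
      · exact coeff_embed_of_not g τ _ hb'
    · intro habs
      exfalso
      apply habs
      rw [mem_fib, ← Finsupp.mapDomain_comp]
  · rw [coeff_embed_of_not (r ∘ g) τ _ h]
    apply Finset.sum_eq_zero
    intro m' hm'
    apply coeff_embed_of_not
    rintro ⟨m1, rfl⟩
    apply h
    rw [mem_fib, ← Finsupp.mapDomain_comp] at hm'
    exact ⟨m1, hm'⟩

lemma wt_mapDomain (r : σ → σ') (d : σ' → ℕ) (m' : σ →₀ ℕ) :
    wt d (Finsupp.mapDomain r m') = wt (fun u => d (r u)) m' := by
  rw [wt, wt]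
  exact Finsupp.sum_mapDomain_index (fun b => zero_mul _) (fun b m₁ m₂ => add_mul _ _ _)

lemma coeff_constTerm (d : σ → ℕ) (q a b : ℕ → MPS σ) (m : σ →₀ ℕ) :
    MvPowerSeries.coeff m (constTerm d q a b)
      = ∑ k ∈ Finset.range (wt d m + 1),
          MvPowerSeries.coeff m (q k * ∑ i ∈ Finset.range (k+1), a i * b (k - i)) := rfl

lemma Rn_constTerm {r : σ → σ'} (hr : ∀ j : σ', (r ⁻¹' {j}).Finite)
    (d : σ → ℕ) (d' : σ' → ℕ) (hd : ∀ u, d u = d' (r u)) (q a b : ℕ → MPS σ) :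
    Rn hr (constTerm d q a b)
      = constTerm d' (fun k => Rn hr (q k)) (fun k => Rn hr (a k)) (fun k => Rn hr (b k)) := by
  apply MvPowerSeries.ext; intro m
  rw [coeff_Rn, coeff_constTerm]
  have key : ∀ m' ∈ fib hr m, wt d m' = wt d' m := by
    intro m' hm'
    rw [mem_fib] at hm'
    rw [← hm', wt_mapDomain, wt, wt]
    exact Finsupp.sum_congr (fun u _ => by rw [hd])
  have h1 : ∀ m' ∈ fib hr m, MvPowerSeries.coeff m' (constTerm d q a b)
      = ∑ k ∈ Finset.range (wt d' m + 1),
          MvPowerSeries.coeff m' (q k * ∑ i ∈ Finset.range (k+1), a i * b (k - i)) := by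
    intro m' hm'
    rw [coeff_constTerm, key m' hm']
  rw [Finset.sum_congr rfl h1, Finset.sum_comm]
  refine Finset.sum_congr rfl fun k _ => ?_
  rw [← coeff_Rn hr, Rn_mul, map_sum]
  exact congrArg _ (congrArg _ (Finset.sum_congr rfl fun i _ => Rn_mul hr _ _))

lemma Rn_xiC {r : σ → σ'} (hr : ∀ j : σ', (r ⁻¹' {j}).Finite) (s : ℕ → MPS σ) (k : ℕ) :
    Rn hr (xiC s k) = xiC (fun n => Rn hr (s n)) k := by
  rw [xiC, xiC]
  have := expC_comm (Rn hr)
    (fun j φ => if j % 2 = 1 then (j : ℂ) • (s (j / 2) * φ) else 0)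
    (fun j φ => if j % 2 = 1 then (j : ℂ) • (Rn hr (s (j / 2)) * φ) else 0)
    (fun j x => by
      split
      · rw [map_smul, Rn_mul]
      · exact map_zero _) k 1
  rw [Rn_one] at this
  exact this

lemma xiC_zero_fun (s : ℕ → MPS σ) (hs : ∀ n, s n = 0) :
    xiC s 0 = 1 ∧ ∀ k, xiC s (k+1) = 0 := by
  constructor
  · rw [xiC, expC_zero]
  · intro k
    rw [xiC, expC_succ]
    have h1 : ∀ i ∈ (Finset.range (k+1)).attach,
        (fun (j : ℕ) (φ : MPS σ) => if j % 2 = 1 then (j : ℂ) • (s (j / 2) * φ) else 0) (k + 1 - i.1)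
          (expC (fun (j : ℕ) (φ : MPS σ) => if j % 2 = 1 then (j : ℂ) • (s (j / 2) * φ) else 0) i.1 1)
          = 0 := by
      intro i _
      dsimp only
      split
      · rw [hs, zero_mul, smul_zero]
      · rfl
    rw [Finset.sum_congr rfl h1, Finset.sum_const_zero, smul_zero]

lemma constTerm_delta (d : σ → ℕ) (q a b : ℕ → MPS σ)
    (hq0 : q 0 = 1) (hq : ∀ k, q (k+1) = 0) :
    constTerm d q a b = a 0 * b 0 := by
  apply MvPowerSeries.ext; intro m
  rw [coeff_constTerm, Finset.sum_eq_single 0]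
  · rw [hq0, one_mul, Finset.sum_range_one]
  · intro k _ hk
    match k, hk with
    | (k+1), _ => rw [hq k, zero_mul, map_zero]
  · intro habs
    exact absurd (Finset.mem_range.mpr (Nat.succ_pos _)) habs

/- ## Concrete maps -/

/-- Rename for setting `t̄' = t̄` (families `0 = t'`, `1 = t`, `2 = t̄`). -/
def r1 : σU → σ3 := fun u => (bif u.2.1 then 2 else bif u.1 then 0 else 1, u.2.2)

/-- Rename for setting `t' = t` (families `0 = t̄'`, `1 = t`, `2 = t̄`). -/
def r2 : σU → σ3 := fun u => (bif u.2.1 then (bif u.1 then 0 else 2) else 1, u.2.2)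

lemma fin_fibers (h : Bool → Bool → Fin 3) (j : σ3) :
    ((fun u : σU => ((h u.1 u.2.1 : Fin 3), u.2.2)) ⁻¹' {j}).Finite := by
  apply (Set.finite_range (fun pb : Bool × Bool => ((pb.1, pb.2, j.2) : σU))).subset
  rintro ⟨p, b, n⟩ hu
  simp only [Set.mem_preimage, Set.mem_singleton_iff] at hu
  have h2 : n = j.2 := congrArg Prod.snd hu
  exact ⟨(p, b), by rw [← h2]⟩

lemma hr1 : ∀ j : σ3, (r1 ⁻¹' {j}).Finite :=
  fin_fibers (fun p b => bif b then 2 else bif p then 0 else 1)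

lemma hr2 : ∀ j : σ3, (r2 ⁻¹' {j}).Finite :=
  fin_fibers (fun p b => bif b then (bif p then 0 else 2) else 1)

def gP : σT → σU := fun p => (true, p.1, p.2)
def gO : σT → σU := fun p => (false, p.1, p.2)

lemma gP_inj : Function.Injective gP := by
  rintro ⟨a, m⟩ ⟨b, n⟩ h; simp_all [gP]

lemma gO_inj : Function.Injective gO := by
  rintro ⟨a, m⟩ ⟨b, n⟩ h; simp_all [gO]

lemma g20_inj : Function.Injective (fun p : σT => ((if p.1 then (2:Fin 3) else 0 : Fin 3), p.2)) := by
  rintro ⟨a, m⟩ ⟨b, n⟩ h; cases a <;> cases b <;> simp_all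

lemma g21_inj : Function.Injective (fun p : σT => ((if p.1 then (2:Fin 3) else 1 : Fin 3), p.2)) := by
  rintro ⟨a, m⟩ ⟨b, n⟩ h; cases a <;> cases b <;> simp_all

lemma g01_inj : Function.Injective (fun p : σT => ((if p.1 then (0:Fin 3) else 1 : Fin 3), p.2)) := by
  rintro ⟨a, m⟩ ⟨b, n⟩ h; cases a <;> cases b <;> simp_all

lemma r1_gP : r1 ∘ gP = (fun p : σT => ((if p.1 then (2:Fin 3) else 0 : Fin 3), p.2)) :=
  funext fun p => by obtain ⟨b, n⟩ := p; cases b <;> rfl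

lemma r1_gO : r1 ∘ gO = (fun p : σT => ((if p.1 then (2:Fin 3) else 1 : Fin 3), p.2)) :=
  funext fun p => by obtain ⟨b, n⟩ := p; cases b <;> rfl

lemma r2_gP : r2 ∘ gP = (fun p : σT => ((if p.1 then (0:Fin 3) else 1 : Fin 3), p.2)) :=
  funext fun p => by obtain ⟨b, n⟩ := p; cases b <;> rfl

lemma r2_gO : r2 ∘ gO = (fun p : σT => ((if p.1 then (2:Fin 3) else 1 : Fin 3), p.2)) :=
  funext fun p => by obtain ⟨b, n⟩ := p; cases b <;> rfl

lemma constTerm_congr {σ : Type} (d : σ → ℕ) {q q' a a' b b' : ℕ → MPS σ}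
    (hq : ∀ k, q k = q' k) (ha : ∀ k, a k = a' k) (hb : ∀ k, b k = b' k) :
    constTerm d q a b = constTerm d q' a' b' := by
  rw [funext hq, funext ha, funext hb]

end BKPaux

open BKPaux

theorem stmt5 (τ : T) (hτ : BKP2 τ) :
    (constTerm d3
        (xiC fun n => (MvPowerSeries.X ((0 : Fin 3), n) : MPS σ3) -
          MvPowerSeries.X ((1 : Fin 3), n))
        (fun k => shiftC (-2) (fun n => (((0 : Fin 3), n) : σ3)) k (j0 τ))
        (fun k => shiftC 2 (fun n => (((1 : Fin 3), n) : σ3)) k (j1 τ))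
      = j0 τ * j1 τ) ∧
    (constTerm d3
        (xiC fun n => (MvPowerSeries.X ((0 : Fin 3), n) : MPS σ3) -
          MvPowerSeries.X ((2 : Fin 3), n))
        (fun k => shiftC (-2) (fun n => (((0 : Fin 3), n) : σ3)) k (j0' τ))
        (fun k => shiftC 2 (fun n => (((2 : Fin 3), n) : σ3)) k (j1' τ))
      = j0' τ * j1' τ) := by
  have hBKP : constTerm dU
      (xiC fun n => (MvPowerSeries.X (true, false, n) : MPS σU) -
        MvPowerSeries.X (false, false, n))
      (fun k => shiftC (-2) (fun n => ((true, false, n) : σU)) k (ιP τ))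
      (fun k => shiftC 2 (fun n => ((false, false, n) : σU)) k (ιO τ))
    = constTerm dU
      (xiC fun n => (MvPowerSeries.X (true, true, n) : MPS σU) -
        MvPowerSeries.X (false, true, n))
      (fun k => shiftC (-2) (fun n => ((true, true, n) : σU)) k (ιP τ))
      (fun k => shiftC 2 (fun n => ((false, true, n) : σU)) k (ιO τ)) := hτ
  have hd1 : ∀ u : σU, dU u = d3 (r1 u) := fun u => rfl
  have hd2 : ∀ u : σU, dU u = d3 (r2 u) := fun u => rfl
  have inj1P : Function.Injective (r1 ∘ gP) := by rw [r1_gP]; exact g20_inj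
  have inj1O : Function.Injective (r1 ∘ gO) := by rw [r1_gO]; exact g21_inj
  have inj2P : Function.Injective (r2 ∘ gP) := by rw [r2_gP]; exact g01_inj
  have inj2O : Function.Injective (r2 ∘ gO) := by rw [r2_gO]; exact g21_inj
  constructor
  · -- first sector: apply `Rn hr1` (i.e. set t̄' = t̄) to the 2-BKP equation
    have key := congrArg (Rn hr1) hBKP
    rw [Rn_constTerm hr1 dU d3 hd1, Rn_constTerm hr1 dU d3 hd1] at key
    refine Eq.trans ?_ (key.trans ?_)
    · refine (constTerm_congr d3 ?_ ?_ ?_).symm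
      · intro k
        rw [Rn_xiC]
        refine congrFun (congrArg xiC (funext fun n => ?_)) k
        rw [map_sub, Rn_X, Rn_X]
        rfl
      · intro k
        rw [show ιP τ = embed gP τ from rfl,
          shiftC_embed gP gP_inj (-2) (fun n => ((false, n) : σT))
            (fun n => ((true, false, n) : σU)) (fun n => rfl) k τ,
          Rn_embed hr1 gP inj1P, r1_gP,
          show j0 τ = embed (fun p : σT => ((if p.1 then (2:Fin 3) else 0 : Fin 3), p.2)) τ
            from rfl,
          shiftC_embed _ g20_inj (-2) (fun n => ((false, n) : σT))
            (fun n => (((0 : Fin 3), n) : σ3)) (fun n => rfl) k τ]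
      · intro k
        rw [show ιO τ = embed gO τ from rfl,
          shiftC_embed gO gO_inj 2 (fun n => ((false, n) : σT))
            (fun n => ((false, false, n) : σU)) (fun n => rfl) k τ,
          Rn_embed hr1 gO inj1O, r1_gO,
          show j1 τ = embed (fun p : σT => ((if p.1 then (2:Fin 3) else 1 : Fin 3), p.2)) τ
            from rfl,
          shiftC_embed _ g21_inj 2 (fun n => ((false, n) : σT))
            (fun n => (((1 : Fin 3), n) : σ3)) (fun n => rfl) k τ]
    · -- the renamed RHS is the trivial constant term
      have h4 : constTerm d3
          (fun k => Rn hr1 ((xiC fun n => (MvPowerSeries.X (true, true, n) : MPS σU) -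
            MvPowerSeries.X (false, true, n)) k))
          (fun k => Rn hr1 (shiftC (-2) (fun n => ((true, true, n) : σU)) k (ιP τ)))
          (fun k => Rn hr1 (shiftC 2 (fun n => ((false, true, n) : σU)) k (ιO τ)))
        = constTerm d3 (xiC (fun _ => (0 : MPS σ3)))
          (fun k => Rn hr1 (shiftC (-2) (fun n => ((true, true, n) : σU)) k (ιP τ)))
          (fun k => Rn hr1 (shiftC 2 (fun n => ((false, true, n) : σU)) k (ιO τ))) := by
        refine constTerm_congr d3 (fun k => ?_) (fun _ => rfl) (fun _ => rfl)
        rw [Rn_xiC]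
        refine congrFun (congrArg xiC (funext fun n => ?_)) k
        rw [map_sub, Rn_X, Rn_X]
        exact sub_self _
      rw [h4, constTerm_delta d3 _ _ _ (xiC_zero_fun _ (fun _ => rfl)).1
        ((xiC_zero_fun _ (fun _ => rfl)).2)]
      show Rn hr1 (shiftC (-2) (fun n => ((true, true, n) : σU)) 0 (ιP τ)) *
          Rn hr1 (shiftC 2 (fun n => ((false, true, n) : σU)) 0 (ιO τ)) = j0 τ * j1 τ
      rw [shiftC_zero, shiftC_zero, show ιP τ = embed gP τ from rfl,
        show ιO τ = embed gO τ from rfl,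
        Rn_embed hr1 gP inj1P, Rn_embed hr1 gO inj1O, r1_gP, r1_gO]
      rfl
  · -- second sector: apply `Rn hr2` (i.e. set t' = t) to the 2-BKP equation
    have key := congrArg (Rn hr2) hBKP.symm
    rw [Rn_constTerm hr2 dU d3 hd2, Rn_constTerm hr2 dU d3 hd2] at key
    refine Eq.trans ?_ (key.trans ?_)
    · refine (constTerm_congr d3 ?_ ?_ ?_).symm
      · intro k
        rw [Rn_xiC]
        refine congrFun (congrArg xiC (funext fun n => ?_)) k
        rw [map_sub, Rn_X, Rn_X]
        rfl
      · intro k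
        rw [show ιP τ = embed gP τ from rfl,
          shiftC_embed gP gP_inj (-2) (fun n => ((true, n) : σT))
            (fun n => ((true, true, n) : σU)) (fun n => rfl) k τ,
          Rn_embed hr2 gP inj2P, r2_gP,
          show j0' τ = embed (fun p : σT => ((if p.1 then (0:Fin 3) else 1 : Fin 3), p.2)) τ
            from rfl,
          shiftC_embed _ g01_inj (-2) (fun n => ((true, n) : σT))
            (fun n => (((0 : Fin 3), n) : σ3)) (fun n => rfl) k τ]
      · intro k
        rw [show ιO τ = embed gO τ from rfl,
          shiftC_embed gO gO_inj 2 (fun n => ((true, n) : σT))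
            (fun n => ((false, true, n) : σU)) (fun n => rfl) k τ,
          Rn_embed hr2 gO inj2O, r2_gO,
          show j1' τ = embed (fun p : σT => ((if p.1 then (2:Fin 3) else 1 : Fin 3), p.2)) τ
            from rfl,
          shiftC_embed _ g21_inj 2 (fun n => ((true, n) : σT))
            (fun n => (((2 : Fin 3), n) : σ3)) (fun n => rfl) k τ]
    · have h4 : constTerm d3
          (fun k => Rn hr2 ((xiC fun n => (MvPowerSeries.X (true, false, n) : MPS σU) -
            MvPowerSeries.X (false, false, n)) k))
          (fun k => Rn hr2 (shiftC (-2) (fun n => ((true, false, n) : σU)) k (ιP τ)))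
          (fun k => Rn hr2 (shiftC 2 (fun n => ((false, false, n) : σU)) k (ιO τ)))
        = constTerm d3 (xiC (fun _ => (0 : MPS σ3)))
          (fun k => Rn hr2 (shiftC (-2) (fun n => ((true, false, n) : σU)) k (ιP τ)))
          (fun k => Rn hr2 (shiftC 2 (fun n => ((false, false, n) : σU)) k (ιO τ))) := by
        refine constTerm_congr d3 (fun k => ?_) (fun _ => rfl) (fun _ => rfl)
        rw [Rn_xiC]
        refine congrFun (congrArg xiC (funext fun n => ?_)) k
        rw [map_sub, Rn_X, Rn_X]
        exact sub_self _
      rw [h4, constTerm_delta d3 _ _ _ (xiC_zero_fun _ (fun _ => rfl)).1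
        ((xiC_zero_fun _ (fun _ => rfl)).2)]
      show Rn hr2 (shiftC (-2) (fun n => ((true, false, n) : σU)) 0 (ιP τ)) *
          Rn hr2 (shiftC 2 (fun n => ((false, false, n) : σU)) 0 (ιO τ)) = j0' τ * j1' τ
      rw [shiftC_zero, shiftC_zero, show ιP τ = embed gP τ from rfl,
        show ιO τ = embed gO τ from rfl,
        Rn_embed hr2 gP inj2P, Rn_embed hr2 gO inj2O, r2_gP, r2_gO]
      rfl

end
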